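/- For all nonnegative integers m, n and every complex number z, one has the bound |H_{m,n}(z̄, z)| ≤ e^{|z|²} √(m! n!). -/

import Mathlib

open Complex

noncomputable def H2 (m n : ℕ) (z₁ z₂ : ℂ) : ℂ :=
  ∑ k ∈ Finset.range (min m n + 1),
    (-1 : ℂ) ^ k * (Nat.factorial k) * (Nat.choose m k) * (Nat.choose n k) *
      z₁ ^ (m - k) * z₂ ^ (n - k)

open Finset

noncomputable def ph (n : ℕ) (z : ℂ) (j p : ℕ) : ℂ :=
  if j ≤ p then (-1:ℂ)^j * (n.choose j) * ((starRingEnd ℂ) z)^(n-j) * z^(p-j) / ((p-j).factorial) else 0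

lemma hasSum_exp_shift (d : ℕ) (w : ℂ) :
    HasSum (fun p : ℕ => if d ≤ p then w^(p-d)/((p-d).factorial) else 0) (Complex.exp w) := by
  have h0 : HasSum (fun q : ℕ => w^q/(q.factorial : ℂ)) (Complex.exp w) := by
    rw [Complex.exp_eq_exp_ℂ]
    exact NormedSpace.expSeries_div_hasSum_exp w
  have h1 : HasSum (fun q : ℕ =>
      (fun p : ℕ => if d ≤ p then w^(p-d)/((p-d).factorial : ℂ) else 0) (q + d)) (Complex.exp w) := by
    simpa using h0
  have h2 := (hasSum_nat_add_iff
    (f := fun p : ℕ => if d ≤ p then w^(p-d)/((p-d).factorial : ℂ) else 0) d).mp h1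
  have h3 : ∑ i ∈ range d, (if d ≤ i then w^(i-d)/((i-d).factorial : ℂ) else 0) = 0 :=
    Finset.sum_eq_zero (fun i hi => if_neg (by have := Finset.mem_range.mp hi; omega))
  rw [h3, add_zero] at h2
  exact h2

noncomputable def cc (n : ℕ) (z : ℂ) (p : ℕ) : ℂ := ∑ j ∈ Finset.range (n+1), ph n z j p

lemma alt_sum_choose (n s : ℕ) :
    ∑ j ∈ Finset.range (n+1), (-1:ℂ)^j * (n.choose j) * (j.choose s) =
      if s = n then (-1:ℂ)^n else 0 := by
  by_cases hs : s ≤ n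
  · have hsub : Finset.Ico s (n+1) ⊆ Finset.range (n+1) := by
      rw [Finset.range_eq_Ico]; exact Finset.Ico_subset_Ico (Nat.zero_le _) le_rfl
    rw [← Finset.sum_subset hsub (fun x hx hx' => by
      have : x < s := by
        simp only [Finset.mem_range] at hx
        simp only [Finset.mem_Ico] at hx'
        omega
      simp [Nat.choose_eq_zero_of_lt this])]
    rw [Finset.sum_Ico_eq_sum_range]
    have hterm : ∀ t ∈ Finset.range (n + 1 - s),
        (-1:ℂ)^(s+t) * ((n.choose (s+t) : ℂ)) * ((s+t).choose s : ℂ)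
          = ((-1:ℂ)^s * (n.choose s)) * ((-1:ℂ)^t * ((n-s).choose t)) := by
      intro t ht
      have h1 : n.choose (s+t) * (s+t).choose s = n.choose s * (n-s).choose t := by
        have := Nat.choose_mul (n := n) (Nat.le_add_right s t)
        simpa using this
      have h2 : ((n.choose (s+t) : ℂ)) * ((s+t).choose s : ℂ)
          = (n.choose s : ℂ) * ((n-s).choose t : ℂ) := by exact_mod_cast congrArg Nat.cast h1
      rw [pow_add]
      calc (-1:ℂ)^s * (-1:ℂ)^t * (n.choose (s+t) : ℂ) * ((s+t).choose s : ℂ)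
          = (-1:ℂ)^s * (-1:ℂ)^t * ((n.choose (s+t) : ℂ) * ((s+t).choose s : ℂ)) := by ring
        _ = (-1:ℂ)^s * (-1:ℂ)^t * ((n.choose s : ℂ) * ((n-s).choose t : ℂ)) := by rw [h2]
        _ = ((-1:ℂ)^s * (n.choose s)) * ((-1:ℂ)^t * ((n-s).choose t)) := by ring
    rw [Finset.sum_congr rfl hterm, ← Finset.mul_sum]
    have halt : ∑ t ∈ Finset.range (n + 1 - s), (-1:ℂ)^t * ((n-s).choose t : ℂ)
        = if n - s = 0 then 1 else 0 := by
      have h := Int.alternating_sum_range_choose (n := n - s)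
      have h' : ((∑ i ∈ Finset.range (n - s + 1), (-1:ℤ)^i * ((n-s).choose i) : ℤ) : ℂ)
          = ((if n - s = 0 then 1 else 0 : ℤ) : ℂ) := by exact_mod_cast congrArg Int.cast h
      push_cast at h'
      have hr : n + 1 - s = n - s + 1 := by omega
      rw [hr]
      exact_mod_cast h'
    rw [halt]
    by_cases hsn : s = n
    · subst hsn; simp
    · have : n - s ≠ 0 := by omega
      simp [this, hsn]
  · have : ∀ j ∈ Finset.range (n+1), (-1:ℂ)^j * (n.choose j) * (j.choose s) = 0 := by
      intro j hj
      have : j < s := by simp only [Finset.mem_range] at hj; omega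
      simp [Nat.choose_eq_zero_of_lt this]
    rw [Finset.sum_eq_zero this, if_neg (by omega)]

lemma vanderNat (p i j n : ℕ) (hi : i ≤ p) (hj : j ≤ p) (hin : i ≤ n) :
    ∑ s ∈ Finset.range (n+1),
      s.factorial * (i.choose s) * (j.choose s) * (i-s).factorial * ((p-j).choose (i-s)) * (p-i).factorial
      = p.factorial := by
  have hsub : Finset.range (i+1) ⊆ Finset.range (n+1) := by
    apply Finset.range_subset_range.mpr; omega
  rw [← Finset.sum_subset hsub (fun x hx hx' => by
    have : i < x := by simp only [Finset.mem_range] at hx hx'; omega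
    simp [Nat.choose_eq_zero_of_lt this])]
  have hterm : ∀ s ∈ Finset.range (i+1),
      s.factorial * (i.choose s) * (j.choose s) * (i-s).factorial * ((p-j).choose (i-s)) * (p-i).factorial
        = (i.factorial * (p-i).factorial) * (j.choose s * (p-j).choose (i-s)) := by
    intro s hs
    have hsi : s ≤ i := by simp only [Finset.mem_range] at hs; omega
    have h1 : i.choose s * s.factorial * (i-s).factorial = i.factorial :=
      Nat.choose_mul_factorial_mul_factorial hsi
    calc s.factorial * (i.choose s) * (j.choose s) * (i-s).factorial * ((p-j).choose (i-s)) * (p-i).factorial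
        = (i.choose s * s.factorial * (i-s).factorial) * (p-i).factorial * (j.choose s * (p-j).choose (i-s)) := by ring
      _ = (i.factorial * (p-i).factorial) * (j.choose s * (p-j).choose (i-s)) := by rw [h1]
  rw [Finset.sum_congr rfl hterm, ← Finset.mul_sum]
  have hv := Nat.add_choose_eq j (p-j) i
  rw [Finset.Nat.sum_antidiagonal_eq_sum_range_succ_mk] at hv
  have hjp : j + (p - j) = p := by omega
  rw [hjp] at hv
  rw [← hv]
  have := Nat.choose_mul_factorial_mul_factorial hi
  calc i.factorial * (p-i).factorial * p.choose i
      = p.choose i * i.factorial * (p-i).factorial := by ring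
    _ = p.factorial := this

lemma vander (p i j n : ℕ) (hi : i ≤ p) (hj : j ≤ p) (hin : i ≤ n) :
    (p.factorial : ℂ) / ((p-j).factorial * (p-i).factorial) =
      ∑ s ∈ Finset.range (n+1),
        if i + j ≤ p + s then
          (s.factorial * (i.choose s) * (j.choose s) : ℂ) / ((p+s-i-j).factorial) else 0 := by
  have hfac : (((p-j).factorial * (p-i).factorial : ℕ) : ℂ) ≠ 0 := by
    exact_mod_cast Nat.mul_ne_zero (Nat.factorial_ne_zero _) (Nat.factorial_ne_zero _)
  push_cast at hfac
  rw [div_eq_iff hfac, Finset.sum_mul]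
  have hterm : ∀ s ∈ Finset.range (n+1),
      (if i + j ≤ p + s then
          (s.factorial * (i.choose s) * (j.choose s) : ℂ) / ((p+s-i-j).factorial) else 0) *
        (((p-j).factorial : ℂ) * ((p-i).factorial : ℂ))
      = ((s.factorial * (i.choose s) * (j.choose s) * (i-s).factorial * ((p-j).choose (i-s)) * (p-i).factorial : ℕ) : ℂ) := by
    intro s _
    by_cases hc : i + j ≤ p + s
    · rw [if_pos hc]
      by_cases hsi : s ≤ i
      · have hisj : i - s ≤ p - j := by omega
        have h1 : (p-j).choose (i-s) * (i-s).factorial * ((p-j)-(i-s)).factorial = (p-j).factorial :=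
          Nat.choose_mul_factorial_mul_factorial hisj
        have h2 : (p-j) - (i-s) = p+s-i-j := by omega
        rw [h2] at h1
        have hne : ((p+s-i-j).factorial : ℂ) ≠ 0 := by
          exact_mod_cast Nat.factorial_ne_zero _
        rw [div_mul_eq_mul_div, div_eq_iff hne]
        push_cast [← h1]
        ring
      · have : i.choose s = 0 := Nat.choose_eq_zero_of_lt (by omega)
        simp [this]
    · rw [if_neg hc]
      have : p - j < i - s := by omega
      have h0 : (p-j).choose (i-s) = 0 := Nat.choose_eq_zero_of_lt this
      simp [h0]
  rw [Finset.sum_congr rfl hterm, ← Nat.cast_sum]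
  rw [vanderNat p i j n hi hj hin]

lemma termSplit (n i j p : ℕ) (z : ℂ) (hin : i ≤ n) (hi : i ≤ p) (hj : j ≤ p) :
    (p.factorial : ℂ) * z^(p-j) * ((starRingEnd ℂ) z)^(p-i) / (((p-j).factorial : ℂ) * ((p-i).factorial : ℂ))
    = ∑ s ∈ Finset.range (n+1),
        (s.factorial * (i.choose s) * (j.choose s) : ℂ) * ((starRingEnd ℂ) z)^(j-s) * z^(i-s) *
          (if i + j ≤ p + s then (z * (starRingEnd ℂ) z)^(p+s-i-j) / ((p+s-i-j).factorial) else 0) := by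
  have hterm : ∀ s ∈ Finset.range (n+1),
      (if i + j ≤ p + s then
          (s.factorial * (i.choose s) * (j.choose s) : ℂ) / ((p+s-i-j).factorial) else 0) *
        (z^(p-j) * ((starRingEnd ℂ) z)^(p-i))
      = (s.factorial * (i.choose s) * (j.choose s) : ℂ) * ((starRingEnd ℂ) z)^(j-s) * z^(i-s) *
          (if i + j ≤ p + s then (z * (starRingEnd ℂ) z)^(p+s-i-j) / ((p+s-i-j).factorial) else 0) := by
    intro s _
    by_cases hc : i + j ≤ p + s
    · by_cases hsij : s ≤ i ∧ s ≤ j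
      · rw [if_pos hc, if_pos hc]
        have e1 : p - j = (i-s) + (p+s-i-j) := by omega
        have e2 : p - i = (j-s) + (p+s-i-j) := by omega
        rw [mul_pow, e1, e2, pow_add, pow_add]
        ring
      · have h0 : (i.choose s : ℂ) * (j.choose s : ℂ) = 0 := by
          rcases (not_and_or.mp hsij) with h | h
          · have : i.choose s = 0 := Nat.choose_eq_zero_of_lt (by omega)
            simp [this]
          · have : j.choose s = 0 := Nat.choose_eq_zero_of_lt (by omega)
            simp [this]
        rcases mul_eq_zero.mp h0 with h | h <;> simp [h]
    · rw [if_neg hc, if_neg hc]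
      simp
  calc (p.factorial : ℂ) * z^(p-j) * ((starRingEnd ℂ) z)^(p-i) / (((p-j).factorial : ℂ) * ((p-i).factorial : ℂ))
      = ((p.factorial : ℂ) / (((p-j).factorial : ℂ) * ((p-i).factorial : ℂ))) * (z^(p-j) * ((starRingEnd ℂ) z)^(p-i)) := by
        ring
    _ = (∑ s ∈ Finset.range (n+1),
          if i + j ≤ p + s then
            (s.factorial * (i.choose s) * (j.choose s) : ℂ) / ((p+s-i-j).factorial) else 0) *
          (z^(p-j) * ((starRingEnd ℂ) z)^(p-i)) := by rw [vander p i j n hi hj hin]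
    _ = ∑ s ∈ Finset.range (n+1), _ := Finset.sum_mul _ _ _
    _ = _ := Finset.sum_congr rfl hterm

lemma hasSum_g (n i j : ℕ) (z : ℂ) (hin : i ≤ n) (hjn : j ≤ n) :
    HasSum (fun p : ℕ => if i ≤ p ∧ j ≤ p then
        (p.factorial : ℂ) * z^(p-j) * ((starRingEnd ℂ) z)^(p-i) / (((p-j).factorial : ℂ) * ((p-i).factorial : ℂ)) else 0)
      (Complex.exp (z * (starRingEnd ℂ) z) *
        ∑ s ∈ Finset.range (n+1),
          (s.factorial * (i.choose s) * (j.choose s) : ℂ) * ((starRingEnd ℂ) z)^(j-s) * z^(i-s)) := by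
  have hG : ∀ s ∈ Finset.range (n+1),
      HasSum (fun p : ℕ =>
          (s.factorial * (i.choose s) * (j.choose s) : ℂ) * ((starRingEnd ℂ) z)^(j-s) * z^(i-s) *
            (if i + j ≤ p + s then (z * (starRingEnd ℂ) z)^(p+s-i-j) / ((p+s-i-j).factorial) else 0))
        ((s.factorial * (i.choose s) * (j.choose s) : ℂ) * ((starRingEnd ℂ) z)^(j-s) * z^(i-s) *
          Complex.exp (z * (starRingEnd ℂ) z)) := by
    intro s _
    by_cases hsij : s ≤ i ∧ s ≤ j
    · have hfun : ∀ p : ℕ,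
          (if i + j ≤ p + s then (z * (starRingEnd ℂ) z)^(p+s-i-j) / (((p+s-i-j).factorial : ℂ)) else 0)
          = (if (i+j-s) ≤ p then (z * (starRingEnd ℂ) z)^(p-(i+j-s))/(((p-(i+j-s)).factorial : ℂ)) else 0) := by
        intro p
        by_cases hc : i + j ≤ p + s
        · rw [if_pos hc, if_pos (by omega)]
          have : p + s - i - j = p - (i+j-s) := by omega
          rw [this]
        · rw [if_neg hc, if_neg (by omega)]
      simp only [hfun]
      exact (hasSum_exp_shift (i+j-s) (z * (starRingEnd ℂ) z)).mul_left _
    · have h0 : (i.choose s : ℂ) * (j.choose s : ℂ) = 0 := by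
        rcases (not_and_or.mp hsij) with h | h
        · have : i.choose s = 0 := Nat.choose_eq_zero_of_lt (by omega)
          simp [this]
        · have : j.choose s = 0 := Nat.choose_eq_zero_of_lt (by omega)
          simp [this]
      rcases mul_eq_zero.mp h0 with h | h <;> simp [h] <;> exact hasSum_zero
  have h := hasSum_sum hG
  have hfe : (fun p : ℕ => if i ≤ p ∧ j ≤ p then
      (p.factorial : ℂ) * z^(p-j) * ((starRingEnd ℂ) z)^(p-i) / (((p-j).factorial : ℂ) * ((p-i).factorial : ℂ)) else 0)
      = (fun p : ℕ => ∑ s ∈ Finset.range (n+1),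
          (s.factorial * (i.choose s) * (j.choose s) : ℂ) * ((starRingEnd ℂ) z)^(j-s) * z^(i-s) *
            (if i + j ≤ p + s then (z * (starRingEnd ℂ) z)^(p+s-i-j) / ((p+s-i-j).factorial) else 0)) := by
    funext p
    by_cases hij : i ≤ p ∧ j ≤ p
    · rw [if_pos hij]
      exact termSplit n i j p z hin hij.1 hij.2
    · rw [if_neg hij]
      refine (Finset.sum_eq_zero fun s _ => ?_).symm
      by_cases hsij : s ≤ i ∧ s ≤ j
      · rw [if_neg (by omega), mul_zero]
      · have h0 : (i.choose s : ℂ) * (j.choose s : ℂ) = 0 := by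
          rcases (not_and_or.mp hsij) with h | h
          · have : i.choose s = 0 := Nat.choose_eq_zero_of_lt (by omega)
            simp [this]
          · have : j.choose s = 0 := Nat.choose_eq_zero_of_lt (by omega)
            simp [this]
        rcases mul_eq_zero.mp h0 with h | h <;> simp [h]
  rw [hfe]
  have htgt : (∑ s ∈ Finset.range (n+1),
      (s.factorial * (i.choose s) * (j.choose s) : ℂ) * ((starRingEnd ℂ) z)^(j-s) * z^(i-s) *
        Complex.exp (z * (starRingEnd ℂ) z))
      = Complex.exp (z * (starRingEnd ℂ) z) *
        ∑ s ∈ Finset.range (n+1),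
          (s.factorial * (i.choose s) * (j.choose s) : ℂ) * ((starRingEnd ℂ) z)^(j-s) * z^(i-s) := by
    rw [← Finset.sum_mul, mul_comm]
  rw [← htgt]
  exact h

lemma hasSum_phi (n i j : ℕ) (z : ℂ) (hin : i ≤ n) (hjn : j ≤ n) :
    HasSum (fun p : ℕ => (p.factorial : ℂ) * ph n z j p * (starRingEnd ℂ) (ph n z i p))
      ((((-1:ℂ)^j * (n.choose j) * ((starRingEnd ℂ) z)^(n-j)) * ((-1:ℂ)^i * (n.choose i) * z^(n-i))) *
        (Complex.exp (z * (starRingEnd ℂ) z) *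
          ∑ s ∈ Finset.range (n+1),
            (s.factorial * (i.choose s) * (j.choose s) : ℂ) * ((starRingEnd ℂ) z)^(j-s) * z^(i-s))) := by
  have h := (hasSum_g n i j z hin hjn).mul_left
    (((-1:ℂ)^j * (n.choose j) * ((starRingEnd ℂ) z)^(n-j)) * ((-1:ℂ)^i * (n.choose i) * z^(n-i)))
  have hfe : (fun p : ℕ => (p.factorial : ℂ) * ph n z j p * (starRingEnd ℂ) (ph n z i p))
      = (fun p : ℕ =>
        (((-1:ℂ)^j * (n.choose j) * ((starRingEnd ℂ) z)^(n-j)) * ((-1:ℂ)^i * (n.choose i) * z^(n-i))) *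
          (if i ≤ p ∧ j ≤ p then
            (p.factorial : ℂ) * z^(p-j) * ((starRingEnd ℂ) z)^(p-i) / (((p-j).factorial : ℂ) * ((p-i).factorial : ℂ)) else 0)) := by
    funext p
    by_cases hij : i ≤ p ∧ j ≤ p
    · rw [if_pos hij]
      unfold ph
      rw [if_pos hij.1, if_pos hij.2]
      simp only [map_div₀, map_mul, map_pow, map_neg, map_one, map_natCast, Complex.conj_conj]
      ring
    · rw [if_neg hij, mul_zero]
      unfold ph
      rcases (not_and_or.mp hij) with h' | h'
      · rw [if_neg h', map_zero, mul_zero]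
      · rw [if_neg h', mul_zero, zero_mul]
  rw [hfe]
  exact h

lemma Vsum (n : ℕ) (z E : ℂ) :
    ∑ j ∈ Finset.range (n+1), ∑ i ∈ Finset.range (n+1),
      ((((-1:ℂ)^j * (n.choose j) * ((starRingEnd ℂ) z)^(n-j)) * ((-1:ℂ)^i * (n.choose i) * z^(n-i))) *
        (E * ∑ s ∈ Finset.range (n+1),
          (s.factorial * (i.choose s) * (j.choose s) : ℂ) * ((starRingEnd ℂ) z)^(j-s) * z^(i-s)))
    = (n.factorial : ℂ) * E := by
  calc ∑ j ∈ Finset.range (n+1), ∑ i ∈ Finset.range (n+1),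
      ((((-1:ℂ)^j * (n.choose j) * ((starRingEnd ℂ) z)^(n-j)) * ((-1:ℂ)^i * (n.choose i) * z^(n-i))) *
        (E * ∑ s ∈ Finset.range (n+1),
          (s.factorial * (i.choose s) * (j.choose s) : ℂ) * ((starRingEnd ℂ) z)^(j-s) * z^(i-s)))
      = ∑ j ∈ Finset.range (n+1), ∑ i ∈ Finset.range (n+1), ∑ s ∈ Finset.range (n+1),
          (E * (s.factorial : ℂ)) *
            (((-1:ℂ)^j * (n.choose j) * (j.choose s) * ((starRingEnd ℂ) z)^(n-j) * ((starRingEnd ℂ) z)^(j-s)) *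
             ((-1:ℂ)^i * (n.choose i) * (i.choose s) * z^(n-i) * z^(i-s))) := by
        refine Finset.sum_congr rfl fun j _ => Finset.sum_congr rfl fun i _ => ?_
        rw [Finset.mul_sum, Finset.mul_sum]
        refine Finset.sum_congr rfl fun s _ => ?_
        ring
    _ = ∑ s ∈ Finset.range (n+1), ∑ j ∈ Finset.range (n+1), ∑ i ∈ Finset.range (n+1),
          (E * (s.factorial : ℂ)) *
            (((-1:ℂ)^j * (n.choose j) * (j.choose s) * ((starRingEnd ℂ) z)^(n-j) * ((starRingEnd ℂ) z)^(j-s)) *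
             ((-1:ℂ)^i * (n.choose i) * (i.choose s) * z^(n-i) * z^(i-s))) := by
        rw [Finset.sum_congr rfl fun j (_ : j ∈ Finset.range (n+1)) => Finset.sum_comm]
        exact Finset.sum_comm
    _ = ∑ s ∈ Finset.range (n+1), (E * (s.factorial : ℂ)) *
          ((∑ j ∈ Finset.range (n+1),
              (-1:ℂ)^j * (n.choose j) * (j.choose s) * ((starRingEnd ℂ) z)^(n-j) * ((starRingEnd ℂ) z)^(j-s)) *
           (∑ i ∈ Finset.range (n+1),
              (-1:ℂ)^i * (n.choose i) * (i.choose s) * z^(n-i) * z^(i-s))) := by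
        refine Finset.sum_congr rfl fun s _ => ?_
        rw [Finset.sum_mul_sum, Finset.mul_sum]
        refine Finset.sum_congr rfl fun j _ => ?_
        rw [Finset.mul_sum]
    _ = ∑ s ∈ Finset.range (n+1), (E * (s.factorial : ℂ)) *
          (((if s = n then (-1:ℂ)^n else 0) * ((starRingEnd ℂ) z)^(n-s)) *
           ((if s = n then (-1:ℂ)^n else 0) * z^(n-s))) := by
        refine Finset.sum_congr rfl fun s _ => ?_
        have hA : ∀ (w : ℂ), (∑ j ∈ Finset.range (n+1),
            (-1:ℂ)^j * (n.choose j) * (j.choose s) * w^(n-j) * w^(j-s))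
            = (if s = n then (-1:ℂ)^n else 0) * w^(n-s) := by
          intro w
          have hterm : ∀ j ∈ Finset.range (n+1),
              (-1:ℂ)^j * (n.choose j) * (j.choose s) * w^(n-j) * w^(j-s)
              = ((-1:ℂ)^j * (n.choose j) * (j.choose s)) * w^(n-s) := by
            intro j hj
            have hjn : j ≤ n := by simp only [Finset.mem_range] at hj; omega
            by_cases hsj : s ≤ j
            · have hw : w^(n-j) * w^(j-s) = w^(n-s) := by
                rw [← pow_add]
                congr 1
                omega
              calc (-1:ℂ)^j * (n.choose j) * (j.choose s) * w^(n-j) * w^(j-s)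
                  = ((-1:ℂ)^j * (n.choose j) * (j.choose s)) * (w^(n-j) * w^(j-s)) := by ring
                _ = ((-1:ℂ)^j * (n.choose j) * (j.choose s)) * w^(n-s) := by rw [hw]
            · have : j.choose s = 0 := Nat.choose_eq_zero_of_lt (by omega)
              simp [this]
          rw [Finset.sum_congr rfl hterm, ← Finset.sum_mul, alt_sum_choose]
        rw [hA ((starRingEnd ℂ) z), hA z]
    _ = (n.factorial : ℂ) * E := by
        rw [Finset.sum_eq_single_of_mem n (Finset.self_mem_range_succ n)
          (fun s _ hs => by simp [hs])]
        have h1 : ((-1:ℂ)^n) * ((-1:ℂ)^n) = 1 := by rw [← mul_pow]; norm_num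
        simp only [if_pos rfl, Nat.sub_self, pow_zero, mul_one]
        calc (E * (n.factorial : ℂ)) * ((-1:ℂ)^n * ((-1:ℂ)^n)) = (E * (n.factorial:ℂ)) * 1 := by rw [h1]
          _ = (n.factorial : ℂ) * E := by ring

lemma hasSum_main (n : ℕ) (z : ℂ) :
    HasSum (fun p : ℕ => (p.factorial : ℂ) * cc n z p * (starRingEnd ℂ) (cc n z p))
      ((n.factorial : ℂ) * Complex.exp (z * (starRingEnd ℂ) z)) := by
  have hjs : ∀ j ∈ Finset.range (n+1),
      HasSum (fun p : ℕ => ∑ i ∈ Finset.range (n+1),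
          (p.factorial : ℂ) * ph n z j p * (starRingEnd ℂ) (ph n z i p))
        (∑ i ∈ Finset.range (n+1),
          ((((-1:ℂ)^j * (n.choose j) * ((starRingEnd ℂ) z)^(n-j)) * ((-1:ℂ)^i * (n.choose i) * z^(n-i))) *
            (Complex.exp (z * (starRingEnd ℂ) z) *
              ∑ s ∈ Finset.range (n+1),
                (s.factorial * (i.choose s) * (j.choose s) : ℂ) * ((starRingEnd ℂ) z)^(j-s) * z^(i-s)))) := by
    intro j hj
    exact hasSum_sum (fun i hi => hasSum_phi n i j z
      (by simp only [Finset.mem_range] at hi; omega) (by simp only [Finset.mem_range] at hj; omega))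
  have h := hasSum_sum hjs
  rw [Vsum n z (Complex.exp (z * (starRingEnd ℂ) z))] at h
  have hfe : (fun p : ℕ => (p.factorial : ℂ) * cc n z p * (starRingEnd ℂ) (cc n z p))
      = (fun p : ℕ => ∑ j ∈ Finset.range (n+1), ∑ i ∈ Finset.range (n+1),
          (p.factorial : ℂ) * ph n z j p * (starRingEnd ℂ) (ph n z i p)) := by
    funext p
    rw [cc, map_sum, Finset.mul_sum]
    have hinner : ∀ i, ((p.factorial : ℂ) * ∑ j ∈ Finset.range (n+1), ph n z j p) *
        (starRingEnd ℂ) (ph n z i p)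
        = ∑ j ∈ Finset.range (n+1),
            (p.factorial : ℂ) * ph n z j p * (starRingEnd ℂ) (ph n z i p) := by
      intro i
      rw [Finset.mul_sum, Finset.sum_mul]
    rw [Finset.sum_congr rfl (fun i _ => hinner i), Finset.sum_comm]
  rw [hfe]
  exact h

lemma H2_eq (m n : ℕ) (z : ℂ) :
    H2 m n ((starRingEnd ℂ) z) z = (starRingEnd ℂ) ((m.factorial : ℂ) * cc n z m) := by
  rw [cc, Finset.mul_sum, map_sum]
  have hsub : Finset.range (min m n + 1) ⊆ Finset.range (n+1) := by
    apply Finset.range_subset_range.mpr; omega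
  rw [H2, ← Finset.sum_subset hsub (fun x hx hx' => by
    have hxm : ¬ (x ≤ m) := by simp only [Finset.mem_range] at hx hx'; omega
    rw [ph, if_neg hxm, mul_zero, map_zero])]
  refine Finset.sum_congr rfl fun k hk => ?_
  have hkm : k ≤ m := by simp only [Finset.mem_range] at hk; omega
  rw [ph, if_pos hkm]
  simp only [map_mul, map_div₀, map_pow, map_natCast, map_neg, map_one, Complex.conj_conj]
  have hfac : (m.factorial : ℂ) = (m.choose k : ℂ) * (k.factorial : ℂ) * ((m-k).factorial : ℂ) := by
    exact_mod_cast congrArg (Nat.cast (R := ℂ)) (Nat.choose_mul_factorial_mul_factorial hkm).symm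
  have hne : ((m-k).factorial : ℂ) ≠ 0 := by exact_mod_cast Nat.factorial_ne_zero _
  field_simp [hfac]
  rw [hfac]
  ring

theorem H2_bound (m n : ℕ) (z : ℂ) :
    ‖H2 m n (starRingEnd ℂ z) z‖ ≤
      Real.exp (‖z‖ ^ 2) * Real.sqrt ((Nat.factorial m) * (Nat.factorial n)) := by
  have hmain := hasSum_main n z
  have h1 : (fun p : ℕ => (p.factorial : ℂ) * cc n z p * (starRingEnd ℂ) (cc n z p))
      = fun p : ℕ => (((p.factorial : ℝ) * Complex.normSq (cc n z p) : ℝ) : ℂ) := by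
    funext p
    rw [mul_assoc, Complex.mul_conj]
    push_cast
    ring
  have h2 : ((n.factorial : ℂ) * Complex.exp (z * (starRingEnd ℂ) z))
      = (((n.factorial : ℝ) * Real.exp (Complex.normSq z) : ℝ) : ℂ) := by
    rw [Complex.mul_conj, ← Complex.ofReal_exp]
    push_cast
    ring
  rw [h1, h2] at hmain
  replace hmain : HasSum (fun p : ℕ => (p.factorial : ℝ) * Complex.normSq (cc n z p))
      ((n.factorial : ℝ) * Real.exp (Complex.normSq z)) := hasSum_ofReal.mp hmain
  have hle : (m.factorial : ℝ) * Complex.normSq (cc n z m)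
      ≤ (n.factorial : ℝ) * Real.exp (Complex.normSq z) :=
    le_hasSum hmain m (fun p _ => mul_nonneg (by positivity) (Complex.normSq_nonneg _))
  have habs : ‖H2 m n ((starRingEnd ℂ) z) z‖
      = (m.factorial : ℝ) * ‖cc n z m‖ := by
    rw [H2_eq m n z, Complex.norm_conj, norm_mul, Complex.norm_natCast]
  have hsq : ‖H2 m n ((starRingEnd ℂ) z) z‖ ^ 2
      ≤ ((m.factorial : ℝ) * (n.factorial : ℝ)) * Real.exp (Complex.normSq z) := by
    rw [habs, mul_pow, Complex.sq_norm]
    calc (m.factorial : ℝ)^2 * Complex.normSq (cc n z m)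
        = (m.factorial : ℝ) * ((m.factorial : ℝ) * Complex.normSq (cc n z m)) := by ring
      _ ≤ (m.factorial : ℝ) * ((n.factorial : ℝ) * Real.exp (Complex.normSq z)) :=
          mul_le_mul_of_nonneg_left hle (by positivity)
      _ = ((m.factorial : ℝ) * (n.factorial : ℝ)) * Real.exp (Complex.normSq z) := by ring
  have h3 : ‖H2 m n ((starRingEnd ℂ) z) z‖
      ≤ Real.sqrt (((m.factorial : ℝ) * (n.factorial : ℝ)) * Real.exp (Complex.normSq z)) :=
    (Real.le_sqrt (norm_nonneg _) (by positivity)).mpr hsq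
  have h4 : Real.sqrt (((m.factorial : ℝ) * (n.factorial : ℝ)) * Real.exp (Complex.normSq z))
      ≤ Real.exp (Complex.normSq z) * Real.sqrt ((m.factorial : ℝ) * (n.factorial : ℝ)) := by
    rw [mul_comm ((m.factorial : ℝ) * (n.factorial : ℝ)) (Real.exp (Complex.normSq z)),
      Real.sqrt_mul (Real.exp_pos _).le]
    apply mul_le_mul_of_nonneg_right _ (Real.sqrt_nonneg _)
    rw [← Real.exp_half]
    exact Real.exp_le_exp.mpr (by linarith [Complex.normSq_nonneg z])
  have hX : Complex.normSq z = ‖z‖ ^ 2 := (Complex.sq_norm z).symm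
  calc ‖H2 m n ((starRingEnd ℂ) z) z‖
      ≤ Real.exp (Complex.normSq z) * Real.sqrt ((m.factorial : ℝ) * (n.factorial : ℝ)) :=
        le_trans h3 h4
    _ = Real.exp (‖z‖ ^ 2) * Real.sqrt ((Nat.factorial m) * (Nat.factorial n)) := by
        rw [hX]
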